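/- Let X and Y be independent non-negative random variables with Y ∈ (0,1) almost surely, and suppose the survival function of X is slowly varying at infinity (i.e. P[X>cx]/P[X>x] → 1 as x→∞ for all c>0). Then P[XY>x]/P[X>x] → 1 as x → ∞. -/

import Mathlib

open MeasureTheory ProbabilityTheory Filter Set

theorem breiman_slowly_varying
    {Ω : Type*} [MeasureSpace Ω] [IsProbabilityMeasure (ℙ : Measure Ω)]
    (X Y : Ω → ℝ) (hXm : Measurable X) (hYm : Measurable Y)
    (hX0 : ∀ᵐ ω ∂ℙ, 0 ≤ X ω) (hY01 : ∀ᵐ ω ∂ℙ, Y ω ∈ Set.Ioo (0:ℝ) 1)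
    (hInd : IndepFun X Y ℙ)
    (hSV : ∀ c > (0:ℝ), Tendsto
      (fun x => (ℙ {ω | c * x < X ω}).toReal / (ℙ {ω | x < X ω}).toReal)
      atTop (nhds 1)) :
    Tendsto (fun x => (ℙ {ω | x < X ω * Y ω}).toReal / (ℙ {ω | x < X ω}).toReal)
      atTop (nhds 1) := by
  have hY0 : ∀ᵐ ω ∂ℙ, 0 < Y ω := hY01.mono fun ω h => h.1
  -- eventual positivity of the denominator
  have hpos : ∀ᶠ x in atTop, 0 < (ℙ {ω | x < X ω}).toReal := by
    have h1 := (hSV 1 one_pos).eventually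
      (eventually_gt_nhds (by norm_num : (1:ℝ)/2 < 1))
    filter_upwards [h1] with x hx
    by_contra h
    push_neg at h
    have h0 : (ℙ {ω | x < X ω}).toReal = 0 := le_antisymm h ENNReal.toReal_nonneg
    simp only [one_mul, h0, div_zero] at hx
    norm_num at hx
  -- ℙ {0 < Y} = 1
  have hY0m : ℙ {ω | 0 < Y ω} = 1 := by
    rw [← prob_compl_eq_zero_iff (measurableSet_lt measurable_const hYm)]
    have : {ω | 0 < Y ω}ᶜ = {ω | ¬ 0 < Y ω} := rfl
    rw [this, ← ae_iff]
    exact hY0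
  -- measure of {δ < Y} tends to 1 along δ = 1/(n+1)
  have hBmono : Monotone (fun n : ℕ => {ω | 1/((n:ℝ)+1) < Y ω}) := by
    intro n m hnm ω hω
    simp only [mem_setOf_eq] at hω ⊢
    refine lt_of_le_of_lt ?_ hω
    have h1 : (0:ℝ) < (n:ℝ) + 1 := by positivity
    have h2 : (n:ℝ) + 1 ≤ (m:ℝ) + 1 := by
      linarith [(Nat.cast_le.mpr hnm : (n:ℝ) ≤ m)]
    exact one_div_le_one_div_of_le h1 h2
  have hUnion : (⋃ n : ℕ, {ω | 1/((n:ℝ)+1) < Y ω}) = {ω | 0 < Y ω} := by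
    ext ω
    simp only [mem_iUnion, mem_setOf_eq]
    constructor
    · rintro ⟨n, hn⟩; exact lt_trans (by positivity) hn
    · intro h; exact exists_nat_one_div_lt h
  have htend : Tendsto (fun n : ℕ => ℙ {ω | 1/((n:ℝ)+1) < Y ω}) atTop (nhds 1) := by
    have h := tendsto_measure_iUnion_atTop (μ := ℙ) hBmono
    rwa [hUnion, hY0m] at h
  have htendR : Tendsto (fun n : ℕ => (ℙ {ω | 1/((n:ℝ)+1) < Y ω}).toReal) atTop
      (nhds 1) := by
    have h := (ENNReal.tendsto_toReal ENNReal.one_ne_top).comp htend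
    exact h
  -- main argument
  rw [Metric.tendsto_nhds]
  intro ε hε
  set η : ℝ := min (ε/3) (1/3) with hηdef
  have hη : 0 < η := lt_min (by linarith) (by norm_num)
  have hη3 : η ≤ 1/3 := min_le_right _ _
  have hηε : η ≤ ε/3 := min_le_left _ _
  -- choose δ with ℙ{δ < Y}.toReal > 1 - η
  obtain ⟨n, hn⟩ := (htendR.eventually
    (eventually_gt_nhds (by linarith : 1 - η < 1))).exists
  set δ : ℝ := 1/((n:ℝ)+1) with hδdef
  have hδ : 0 < δ := by positivity
  -- slow variation at c = 1/δ
  have hSVd := (hSV (1/δ) (by positivity)).eventually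
    (eventually_gt_nhds (by linarith : 1 - η < 1))
  filter_upwards [hpos, hSVd, eventually_gt_atTop (0:ℝ)] with x hFpos hA hx
  set F : ℝ := (ℙ {ω | x < X ω}).toReal with hF
  set T : ℝ := (ℙ {ω | x < X ω * Y ω}).toReal with hT
  -- upper bound : T ≤ F
  have hub : T ≤ F := by
    apply ENNReal.toReal_mono (measure_ne_top _ _)
    apply measure_mono_ae
    filter_upwards [hX0, hY01] with ω h0 h1 hω
    exact lt_of_lt_of_le hω (mul_le_of_le_one_right h0 h1.2.le)
  -- lower bound
  have hinter : ℙ ({ω | (1/δ) * x < X ω} ∩ {ω | δ < Y ω})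
      ≤ ℙ {ω | x < X ω * Y ω} := by
    apply measure_mono
    rintro ω ⟨h1, h2⟩
    simp only [mem_setOf_eq] at h1 h2 ⊢
    have hXpos : 0 < X ω := lt_trans (by positivity) h1
    have hx' : x < X ω * δ := by
      rw [one_div_mul_eq_div] at h1
      exact (div_lt_iff₀ hδ).mp h1
    exact lt_trans hx' (mul_lt_mul_of_pos_left h2 hXpos)
  have hprod : ℙ ({ω | (1/δ) * x < X ω} ∩ {ω | δ < Y ω})
      = ℙ {ω | (1/δ) * x < X ω} * ℙ {ω | δ < Y ω} :=
    hInd.measure_inter_preimage_eq_mul (Set.Ioi ((1/δ)*x)) (Set.Ioi δ)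
      measurableSet_Ioi measurableSet_Ioi
  have hlb : (ℙ {ω | (1/δ) * x < X ω}).toReal * (ℙ {ω | δ < Y ω}).toReal ≤ T := by
    rw [← ENNReal.toReal_mul, ← hprod]
    exact ENNReal.toReal_mono (measure_ne_top _ _) hinter
  set a : ℝ := (ℙ {ω | (1/δ) * x < X ω}).toReal
  set b : ℝ := (ℙ {ω | δ < Y ω}).toReal
  have hAx : 1 - η < a / F := hA
  have hb : 1 - η < b := hn
  have h1η : (0:ℝ) < 1 - η := by linarith
  have hmul : (1 - η) * (1 - η) < (a / F) * b :=
    mul_lt_mul'' hAx hb h1η.le h1η.le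
  have hTF : (a / F) * b ≤ T / F := by
    rw [div_mul_eq_mul_div, div_le_div_iff_of_pos_right hFpos]
    exact hlb
  have hlow : 1 - ε < T / F := by
    nlinarith
  have hhigh : T / F ≤ 1 := div_le_one_of_le₀ hub (le_of_lt hFpos)
  rw [Real.dist_eq, abs_sub_lt_iff]
  constructor <;> linarith
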